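/- Decomposition lemma: for every α > h̲, L_α = L̃_α ∪ Θ, where L_α uses all state-1 vertices S = {u : X_u = 1}, L̃_α uses only 'newly appearing' vertices S̃ = {u : X_u = 1, X_{π(u)} = 0}, and Θ is the set of torus points obtained as limits along infinite state-1 branches. In particular, any point of L_α not in L̃_α lies in Θ. -/

import Mathlib

noncomputable def wordVal (u : List Bool) : ℝ :=
  ∑ k ∈ Finset.range u.length, if u.getD k false then (2:ℝ) ^ (-(k:ℤ) - 1) else 0

noncomputable def wordPt (u : List Bool) : AddCircle (1:ℝ) := ((wordVal u : ℝ) : AddCircle (1:ℝ))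

def bigL (hlo : ℝ) (S : Set (List Bool)) (α : ℝ) : Set (AddCircle (1:ℝ)) :=
  {x | {u : List Bool | u ∈ S ∧
    dist x (wordPt u) < (2:ℝ) ^ (-(hlo * u.length) / α)}.Infinite}

def tauTree (X : List Bool → Bool) (u : List Bool) : Set (List Bool) :=
  {v | u <+: v ∧ ∀ j : ℕ, u.length ≤ j → j ≤ v.length → X (v.take j) = true}

def treeBoundary (X : List Bool → Bool) (u : List Bool) : Set (ℕ → Bool) :=
  {ζ | ∀ j : ℕ, u.length ≤ j → (List.ofFn fun i : Fin j => ζ i) ∈ tauTree X u}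

noncomputable def seqVal (ζ : ℕ → Bool) : ℝ :=
  ∑' j : ℕ, if ζ j then (2:ℝ) ^ (-(j:ℤ) - 1) else 0

noncomputable def ThetaDot (X : List Bool → Bool) : Set ℝ :=
  ⋃ u : List Bool, ⋃ ζ ∈ treeBoundary X u, {seqVal ζ}

/-- `Θ = φ(Θ̇) ⊆ 𝕋`. -/
noncomputable def ThetaSet (X : List Bool → Bool) : Set (AddCircle (1:ℝ)) :=
  (fun r : ℝ => ((r : ℝ) : AddCircle (1:ℝ))) '' ThetaDot X

section Aux14

noncomputable def aux14g (k : ℕ) : ℝ := (2:ℝ) ^ (-(k:ℤ) - 1)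

lemma aux14g_eq (k : ℕ) : aux14g k = (2⁻¹:ℝ) ^ (k+1) := by
  rw [aux14g, show (-(k:ℤ) - 1) = -((k:ℤ)+1) by ring, zpow_neg, ← inv_zpow]
  rw [show ((k:ℤ)+1) = ((k+1 : ℕ) : ℤ) by push_cast; ring, zpow_natCast]

lemma aux14g_pos (k : ℕ) : 0 < aux14g k := by rw [aux14g_eq]; positivity

lemma aux14g_summable : Summable aux14g := by
  have h := summable_geometric_of_lt_one (by norm_num : (0:ℝ) ≤ 2⁻¹) (by norm_num)
  exact (h.mul_left 2⁻¹).congr (fun k => by rw [aux14g_eq, pow_succ]; ring)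

lemma aux14g_tsum : ∑' k, aux14g k = 1 := by
  rw [tsum_congr (fun k => by rw [aux14g_eq, pow_succ]; ring :
    ∀ k : ℕ, aux14g k = 2⁻¹ * (2⁻¹:ℝ)^k), tsum_mul_left,
    tsum_geometric_of_lt_one (by norm_num) (by norm_num)]
  norm_num

lemma aux14_two_rpow_neg_nat (j : ℕ) : (2:ℝ) ^ (-(j:ℝ)) = (2⁻¹:ℝ) ^ j := by
  rw [Real.rpow_neg (by norm_num), Real.rpow_natCast, inv_pow]

lemma aux14g_tail (j : ℕ) : ∑' k, aux14g (k + j) = (2:ℝ) ^ (-(j:ℝ)) := by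
  have h : ∀ k : ℕ, aux14g (k + j) = (2:ℝ)^(-(j:ℝ)) * aux14g k := by
    intro k
    rw [aux14g_eq, aux14g_eq, aux14_two_rpow_neg_nat, show k + j + 1 = (k+1) + j by ring,
      pow_add]
    ring
  rw [tsum_congr h, tsum_mul_left, aux14g_tsum, mul_one]

noncomputable def aux14f (c : ℕ → Bool) (k : ℕ) : ℝ := if c k then aux14g k else 0

lemma aux14f_nonneg (c : ℕ → Bool) (k : ℕ) : 0 ≤ aux14f c k := by
  unfold aux14f; split <;> [exact (aux14g_pos k).le; rfl]

lemma aux14f_le (c : ℕ → Bool) (k : ℕ) : aux14f c k ≤ aux14g k := by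
  unfold aux14f; split <;> [rfl; exact (aux14g_pos k).le]

lemma aux14f_summable (c : ℕ → Bool) : Summable (aux14f c) :=
  Summable.of_nonneg_of_le (aux14f_nonneg c) (aux14f_le c) aux14g_summable

lemma aux14_getD_take (u : List Bool) (j k : ℕ) (hk : k < j) :
    (u.take j).getD k false = u.getD k false := by
  rcases lt_or_ge k u.length with h | h
  · rw [List.getD_eq_getElem _ _ (by simp; omega), List.getD_eq_getElem _ _ h, List.getElem_take]
  · rw [List.getD_eq_default _ _ (by simp; omega), List.getD_eq_default _ _ h]

lemma aux14_wordVal_eq (u : List Bool) :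
    wordVal u = ∑ k ∈ Finset.range u.length, aux14f (fun k => u.getD k false) k := rfl

lemma aux14_seqVal_eq (ζ : ℕ → Bool) : seqVal ζ = ∑' k, aux14f ζ k := rfl

lemma aux14_sum_range_le (c : ℕ → Bool) {j m : ℕ} (hj : j ≤ m) :
    0 ≤ (∑ k ∈ Finset.range m, aux14f c k) - ∑ k ∈ Finset.range j, aux14f c k ∧
    (∑ k ∈ Finset.range m, aux14f c k) - (∑ k ∈ Finset.range j, aux14f c k) ≤ (2:ℝ)^(-(j:ℝ)) := by
  rw [← Finset.sum_Ico_eq_sub _ hj]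
  constructor
  · exact Finset.sum_nonneg fun k _ => aux14f_nonneg c k
  · calc ∑ k ∈ Finset.Ico j m, aux14f c k ≤ ∑ k ∈ Finset.Ico j m, aux14g k :=
          Finset.sum_le_sum fun k _ => aux14f_le c k
      _ = ∑ k ∈ Finset.range (m - j), aux14g (j + k) := by rw [Finset.sum_Ico_eq_sum_range]
      _ = ∑ k ∈ Finset.range (m - j), aux14g (k + j) := by
          exact Finset.sum_congr rfl fun k _ => by rw [add_comm]
      _ ≤ ∑' k, aux14g (k + j) := by
          exact Summable.sum_le_tsum _ (fun k _ => (aux14g_pos _).le)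
            ((summable_nat_add_iff j).2 aux14g_summable)
      _ = (2:ℝ)^(-(j:ℝ)) := aux14g_tail j

lemma aux14_wordVal_take (u : List Bool) (j : ℕ) (hj : j ≤ u.length) :
    0 ≤ wordVal u - wordVal (u.take j) ∧ wordVal u - wordVal (u.take j) ≤ (2:ℝ)^(-(j:ℝ)) := by
  have hwt : wordVal (u.take j) = ∑ k ∈ Finset.range j, aux14f (fun k => u.getD k false) k := by
    rw [aux14_wordVal_eq, List.length_take, min_eq_left hj]
    exact Finset.sum_congr rfl fun k hk => by
      simp only [aux14f, aux14_getD_take u j k (Finset.mem_range.mp hk)]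
  rw [aux14_wordVal_eq u, hwt]
  exact aux14_sum_range_le _ hj

lemma aux14_wordVal_ofFn (ζ : ℕ → Bool) (j : ℕ) :
    wordVal (List.ofFn fun i : Fin j => ζ i) = ∑ k ∈ Finset.range j, aux14f ζ k := by
  rw [aux14_wordVal_eq, List.length_ofFn]
  refine Finset.sum_congr rfl fun k hk => ?_
  have h : (List.ofFn fun i : Fin j => ζ i).getD k false = ζ k := by
    rw [List.getD_eq_getElem _ _ (by simpa using Finset.mem_range.mp hk)]
    simp
  simp only [aux14f, h]

lemma aux14_seqVal_sub (ζ : ℕ → Bool) (j : ℕ) :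
    0 ≤ seqVal ζ - wordVal (List.ofFn fun i : Fin j => ζ i) ∧
    seqVal ζ - wordVal (List.ofFn fun i : Fin j => ζ i) ≤ (2:ℝ)^(-(j:ℝ)) := by
  rw [aux14_seqVal_eq, aux14_wordVal_ofFn,
    ← Summable.sum_add_tsum_nat_add j (aux14f_summable ζ)]
  simp only [add_sub_cancel_left]
  constructor
  · exact tsum_nonneg fun k => aux14f_nonneg ζ _
  · calc (∑' k, aux14f ζ (k + j)) ≤ ∑' k, aux14g (k + j) :=
        Summable.tsum_le_tsum (fun k => aux14f_le ζ _) ((summable_nat_add_iff j).2 (aux14f_summable ζ))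
          ((summable_nat_add_iff j).2 aux14g_summable)
      _ = (2:ℝ)^(-(j:ℝ)) := aux14g_tail j

lemma aux14_dist_coe (a b : ℝ) :
    dist ((a:ℝ):AddCircle (1:ℝ)) ((b:ℝ):AddCircle (1:ℝ)) ≤ |a - b| := by
  rw [dist_eq_norm, ← QuotientAddGroup.mk_sub]
  calc ‖((a - b : ℝ) : AddCircle (1:ℝ))‖ ≤ ‖a - b‖ := QuotientAddGroup.norm_mk_le_norm
    _ = |a - b| := Real.norm_eq_abs _

lemma aux14_exp_lt (c ε : ℝ) (hc : 0 < c) (hε : 0 < ε) :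
    ∃ J : ℕ, ∀ j : ℕ, J ≤ j → (2:ℝ) ^ (-(c * j)) < ε := by
  have hb : (2:ℝ)^(-c) < 1 := Real.rpow_lt_one_of_one_lt_of_neg one_lt_two (by linarith)
  have hb0 : (0:ℝ) ≤ (2:ℝ)^(-c) := Real.rpow_nonneg (by norm_num) _
  obtain ⟨J, hJ⟩ := exists_pow_lt_of_lt_one hε hb
  refine ⟨J, fun j hj => ?_⟩
  have h1 : (2:ℝ)^(-(c*(j:ℝ))) = ((2:ℝ)^(-c))^j := by
    rw [← Real.rpow_natCast ((2:ℝ)^(-c)) j, ← Real.rpow_mul (by norm_num)]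
    ring_nf
  rw [h1]
  calc ((2:ℝ)^(-c))^j ≤ ((2:ℝ)^(-c))^J := pow_le_pow_of_le_one hb0 hb.le hj
    _ < ε := hJ

lemma aux14_take_ofFn (ζ : ℕ → Bool) {N j : ℕ} (h : N ≤ j) :
    (List.ofFn fun i : Fin j => ζ i).take N = List.ofFn fun i : Fin N => ζ i := by
  apply List.ext_getElem
  · simp; omega
  · intro i h1 h2
    simp [List.getElem_take]

lemma aux14_take_eq (u : List Bool) (ζ : ℕ → Bool) (j : ℕ) (hj : j ≤ u.length)
    (h : ∀ i < j, u.getD i false = ζ i) :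
    u.take j = List.ofFn fun i : Fin j => ζ i := by
  apply List.ext_getElem
  · simp; omega
  · intro i h1 h2
    have h2' : i < j := by simpa using h2
    simp only [List.getElem_ofFn, List.getElem_take]
    rw [← h i h2', List.getD_eq_getElem _ _ (by omega)]

lemma aux14_dropLast_take (u : List Bool) (r : ℕ) (hr : r + 1 ≤ u.length) :
    (u.take (r+1)).dropLast = u.take r := by
  rw [List.dropLast_eq_take, List.take_take]
  congr 1
  simp
  omega

end Aux14

/-- decomposition lemma: for every `α > h̲`,
`L_α = L̃_α ∪ Θ`, where `L_α` uses all state-1 vertices `S = {u : X_u = 1}` and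
`L̃_α` only the newly appearing ones `S̃ = {u ≠ ∅ : X_u = 1, X_{π(u)} = 0}`.
In particular `L_α \ L̃_α ⊆ Θ`. -/
theorem stmt14 (hlo : ℝ) (h0 : 0 < hlo) (X : List Bool → Bool) :
    ∀ α : ℝ, hlo < α →
      bigL hlo {u : List Bool | X u = true} α =
        bigL hlo {u : List Bool | u ≠ [] ∧ X u = true ∧ X u.dropLast = false} α ∪
          ThetaSet X := by
  classical
  intro α hα
  have hα0 : 0 < α := h0.trans hα
  have hform : ∀ n : ℕ, (-(hlo * (n:ℝ)) / α) = -((hlo/α) * n) := by intro n; ring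
  apply Set.Subset.antisymm
  · -- hard direction
    intro x hx
    by_cases hxt : x ∈ bigL hlo {u : List Bool | u ≠ [] ∧ X u = true ∧ X u.dropLast = false} α
    · exact Or.inl hxt
    right
    simp only [bigL, Set.mem_setOf_eq] at hx hxt
    have hF : {v : List Bool | (v ≠ [] ∧ X v = true ∧ X v.dropLast = false) ∧
        dist x (wordPt v) < (2:ℝ)^(-(hlo * v.length)/α)}.Finite := Set.not_infinite.mp hxt
    obtain ⟨M, hM⟩ : ∃ M : ℕ, ∀ v : List Bool, ((v ≠ [] ∧ X v = true ∧ X v.dropLast = false) ∧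
        dist x (wordPt v) < (2:ℝ)^(-(hlo * v.length)/α)) → v.length ≤ M := by
      obtain ⟨M, hM⟩ := (hF.image List.length).bddAbove
      exact ⟨M, fun v hv => hM (Set.mem_image_of_mem _ hv)⟩
    -- choice of K
    have hbδ : (2:ℝ)^(-(hlo/α)) < 1 :=
      Real.rpow_lt_one_of_one_lt_of_neg one_lt_two
        (by have := div_pos h0 hα0; linarith)
    have hδ : 0 < 1 - (2:ℝ)^(-(hlo/α)) := by linarith
    have hb2 : (2:ℝ)^(-((α - hlo)/α)) < 1 :=
      Real.rpow_lt_one_of_one_lt_of_neg one_lt_two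
        (by have : 0 < (α - hlo)/α := div_pos (by linarith) hα0; linarith)
    have hb20 : (0:ℝ) ≤ (2:ℝ)^(-((α - hlo)/α)) := Real.rpow_nonneg (by norm_num) _
    obtain ⟨K, hK⟩ := exists_pow_lt_of_lt_one hδ hb2
    set N := max K (M+1) + 1 with hNdef
    have hsmall : ∀ r : ℕ, K ≤ r →
        (2:ℝ)^(-(r:ℝ) + hlo*r/α) < 1 - (2:ℝ)^(-(hlo/α)) := by
      intro r hr
      have he : (2:ℝ)^(-(r:ℝ) + hlo*r/α) = ((2:ℝ)^(-((α - hlo)/α)))^r := by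
        rw [← Real.rpow_natCast ((2:ℝ)^(-((α - hlo)/α))) r, ← Real.rpow_mul (by norm_num)]
        congr 1
        field_simp
        ring
      rw [he]
      calc ((2:ℝ)^(-((α - hlo)/α)))^r ≤ ((2:ℝ)^(-((α - hlo)/α)))^K :=
            pow_le_pow_of_le_one hb20 hb2.le hr
        _ < _ := hK
    -- the claim: deep state-1 prefixes
    have claim : ∀ u : List Bool,
        (X u = true ∧ dist x (wordPt u) < (2:ℝ)^(-(hlo * (u.length:ℝ))/α)) →
        ∀ j, N ≤ j → j ≤ u.length → X (u.take j) = true := by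
      intro u hu
      by_contra hcon
      push_neg at hcon
      obtain ⟨j0, hj0N, hj0len, hj0X⟩ := hcon
      have hj0X' : X (u.take j0) = false := by simpa using hj0X
      set P : ℕ → Prop := fun j => N ≤ j ∧ X (u.take j) = false with hPdef
      set j := Nat.findGreatest P u.length with hjdef
      have hPj : P j := Nat.findGreatest_spec hj0len ⟨hj0N, hj0X'⟩
      have hjub : j ≤ u.length := Nat.findGreatest_le _
      have hjlt : j < u.length := by
        rcases lt_or_eq_of_le hjub with h | h
        · exact h
        · exfalso
          have h2 : u.take j = u := by rw [h]; simp
          have := hPj.2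
          rw [h2, hu.1] at this
          exact absurd this (by simp)
      have hXv : X (u.take (j+1)) = true := by
        have hng : ¬ P (j+1) := Nat.findGreatest_is_greatest (lt_add_one j) (by omega)
        have hN1 : N ≤ j + 1 := le_trans hPj.1 (Nat.le_succ _)
        by_contra hc
        exact hng ⟨hN1, by simpa using hc⟩
      have hlenv : (u.take (j+1)).length = j+1 := by
        rw [List.length_take]; omega
      have hdistv : dist x (wordPt (u.take (j+1))) <
          (2:ℝ)^(-(hlo * (((u.take (j+1)).length:ℕ):ℝ))/α) := by
        rw [hlenv]
        rcases eq_or_lt_of_le (show j+1 ≤ u.length by omega) with heq | hlt'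
        · have h2 : u.take (j+1) = u := by rw [heq]; simp
          rw [h2]
          have h3 := hu.2
          rwa [show ((u.length:ℕ):ℝ) = (((j+1:ℕ)):ℝ) by rw [← heq]] at h3
        · have h1 := hu.2
          have h2 := aux14_wordVal_take u (j+1) (by omega)
          have h3 : dist (wordPt u) (wordPt (u.take (j+1))) ≤ (2:ℝ)^(-((j+1:ℕ):ℝ)) := by
            calc dist (wordPt u) (wordPt (u.take (j+1)))
                ≤ |wordVal u - wordVal (u.take (j+1))| := aux14_dist_coe _ _
              _ ≤ _ := by rw [abs_of_nonneg h2.1]; exact h2.2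
          have hrK : K ≤ j + 1 := by
            have : K + 1 ≤ N := by omega
            omega
          have hsm := hsmall (j+1) hrK
          set t : ℝ := (2:ℝ)^(-(hlo * (((j+1:ℕ)):ℝ))/α) with htdef
          have ht0 : 0 < t := Real.rpow_pos_of_pos (by norm_num) _
          have hsm0 : (0:ℝ) ≤ (2:ℝ)^(-((j+1:ℕ):ℝ) + hlo*((j+1:ℕ):ℝ)/α) :=
            Real.rpow_nonneg (by norm_num) _
          have e1 : (2:ℝ)^(-(hlo * (u.length:ℝ))/α) ≤ t * (2:ℝ)^(-(hlo/α)) := by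
            rw [htdef, ← Real.rpow_add (by norm_num)]
            apply (Real.rpow_le_rpow_left_iff one_lt_two).mpr
            have hur : ((j+1:ℕ):ℝ) + 1 ≤ (u.length:ℝ) := by exact_mod_cast hlt'
            have hstep : -(hlo * (u.length:ℝ))/α ≤ (-(hlo * ((j+1:ℕ):ℝ)) + -hlo)/α := by
              apply (div_le_div_iff_of_pos_right hα0).mpr
              nlinarith
            calc -(hlo * (u.length:ℝ))/α ≤ (-(hlo * ((j+1:ℕ):ℝ)) + -hlo)/α := hstep
              _ = -(hlo * ((j+1:ℕ):ℝ))/α + -(hlo/α) := by ring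
          have e2 : (2:ℝ)^(-((j+1:ℕ):ℝ)) =
              t * (2:ℝ)^(-((j+1:ℕ):ℝ) + hlo*((j+1:ℕ):ℝ)/α) := by
            rw [htdef, ← Real.rpow_add (by norm_num)]
            congr 1
            ring
          calc dist x (wordPt (u.take (j+1)))
              ≤ dist x (wordPt u) + dist (wordPt u) (wordPt (u.take (j+1))) :=
                dist_triangle _ _ _
            _ < (2:ℝ)^(-(hlo * (u.length:ℝ))/α) + (2:ℝ)^(-((j+1:ℕ):ℝ)) :=
                add_lt_add_of_lt_of_le h1 h3
            _ ≤ t * (2:ℝ)^(-(hlo/α)) + t * (2:ℝ)^(-((j+1:ℕ):ℝ) + hlo*((j+1:ℕ):ℝ)/α) := by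
                rw [← e2]; linarith
            _ < t * 1 := by nlinarith
            _ = t := mul_one t
      have hmem : (u.take (j+1)) ≠ [] ∧ X (u.take (j+1)) = true ∧
          X ((u.take (j+1)).dropLast) = false := by
        refine ⟨?_, hXv, ?_⟩
        · intro h
          have := congrArg List.length h
          rw [hlenv] at this
          simp at this
        · rw [aux14_dropLast_take u j (by omega)]
          exact hPj.2
      have hlem := hM _ ⟨hmem, hdistv⟩
      rw [hlenv] at hlem
      have : N ≤ j := hPj.1
      omega
    -- select words of unbounded length
    have hsel : ∀ n : ℕ, ∃ u : List Bool,
        (X u = true ∧ dist x (wordPt u) < (2:ℝ)^(-(hlo * (u.length:ℝ))/α)) ∧ n ≤ u.length := by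
      intro n
      have hfin : {l : List Bool | l.length ≤ n}.Finite := List.finite_length_le Bool n
      obtain ⟨u, hu⟩ := (hx.diff hfin).nonempty
      exact ⟨u, hu.1, by
        have := hu.2
        simp only [Set.mem_setOf_eq] at this
        omega⟩
    choose u huT hul using hsel
    obtain ⟨ζ, φ, hφ, hconv⟩ := CompactSpace.tendsto_subseq (fun n i => (u n).getD i false)
    have hcoord : ∀ i : ℕ, ∀ᶠ k in Filter.atTop, (u (φ k)).getD i false = ζ i := by
      intro i
      have h1 := tendsto_pi_nhds.mp hconv i
      rw [nhds_discrete] at h1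
      exact Filter.tendsto_pure.mp h1
    have hpref : ∀ j : ℕ, ∃ k : ℕ, j ≤ φ k ∧
        (u (φ k)).take j = (List.ofFn fun i : Fin j => ζ i) := by
      intro j
      have hall : ∀ᶠ k in Filter.atTop, ∀ i ∈ Finset.range j, (u (φ k)).getD i false = ζ i :=
        (Filter.eventually_all_finset _).mpr (fun i _ => hcoord i)
      obtain ⟨k, hk1, hk2⟩ := (hall.and (Filter.eventually_ge_atTop j)).exists
      have hjφ : j ≤ φ k := le_trans hk2 (hφ.le_apply)
      refine ⟨k, hjφ, ?_⟩
      exact aux14_take_eq _ ζ j (le_trans hjφ (hul _))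
        (fun i hi => hk1 i (Finset.mem_range.mpr hi))
    have hXw : ∀ j : ℕ, N ≤ j → X (List.ofFn fun i : Fin j => ζ i) = true := by
      intro j hj
      obtain ⟨k, hk, he⟩ := hpref j
      rw [← he]
      exact claim _ (huT _) j hj (le_trans hk (hul _))
    have hθ : seqVal ζ ∈ ThetaDot X := by
      simp only [ThetaDot, Set.mem_iUnion, Set.mem_singleton_iff]
      refine ⟨List.ofFn fun i : Fin N => ζ i, ζ, ?_, rfl⟩
      intro j hj
      have hNj : N ≤ j := by rw [List.length_ofFn] at hj; exact hj
      constructor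
      · have h1 : (List.ofFn fun i : Fin j => ζ i).take N = List.ofFn fun i : Fin N => ζ i :=
          aux14_take_ofFn ζ hNj
        exact h1 ▸ List.take_prefix _ _
      · intro j' h1 h2
        have h1' : N ≤ j' := by rw [List.length_ofFn] at h1; exact h1
        have h2' : j' ≤ j := by simpa using h2
        rw [aux14_take_ofFn ζ h2']
        exact hXw j' h1'
    have hxeq : x = ((seqVal ζ : ℝ) : AddCircle (1:ℝ)) := by
      apply eq_of_forall_dist_le
      intro ε hε
      obtain ⟨J1, hJ1⟩ := aux14_exp_lt (hlo/α) (ε/3) (div_pos h0 hα0) (by linarith)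
      obtain ⟨J2, hJ2⟩ := aux14_exp_lt 1 (ε/3) one_pos (by linarith)
      set j := max J1 J2 with hjdef2
      obtain ⟨k, hk, he⟩ := hpref j
      set v := u (φ k) with hvdef
      have hvlen : j ≤ v.length := le_trans hk (hul _)
      have hone : (2:ℝ)^(-(j:ℝ)) < ε/3 := by
        have := hJ2 j (le_max_right _ _)
        rwa [one_mul] at this
      have hd1 : dist x (wordPt v) < ε/3 := by
        have h1 := (huT (φ k)).2
        have h2 : (2:ℝ)^(-(hlo * (v.length:ℝ))/α) ≤ (2:ℝ)^(-(hlo/α * (j:ℝ))) := by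
          apply (Real.rpow_le_rpow_left_iff one_lt_two).mpr
          rw [hform v.length]
          have : ((j:ℕ):ℝ) ≤ (v.length:ℝ) := by exact_mod_cast hvlen
          have hc : 0 < hlo/α := div_pos h0 hα0
          nlinarith
        exact lt_of_lt_of_le (lt_of_lt_of_le h1 h2) (le_of_lt (hJ1 j (le_max_left _ _)))
      have hd2 : dist (wordPt v) (wordPt (List.ofFn fun i : Fin j => ζ i)) < ε/3 := by
        rw [← he]
        have h2 := aux14_wordVal_take v j hvlen
        calc dist (wordPt v) (wordPt (v.take j))
            ≤ |wordVal v - wordVal (v.take j)| := aux14_dist_coe _ _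
          _ ≤ (2:ℝ)^(-(j:ℝ)) := by rw [abs_of_nonneg h2.1]; exact h2.2
          _ < ε/3 := hone
      have hd3 : dist (wordPt (List.ofFn fun i : Fin j => ζ i))
          (((seqVal ζ : ℝ) : AddCircle (1:ℝ))) < ε/3 := by
        have h2 := aux14_seqVal_sub ζ j
        calc dist (wordPt (List.ofFn fun i : Fin j => ζ i)) (((seqVal ζ : ℝ) : AddCircle (1:ℝ)))
            ≤ |wordVal (List.ofFn fun i : Fin j => ζ i) - seqVal ζ| := aux14_dist_coe _ _
          _ = |seqVal ζ - wordVal (List.ofFn fun i : Fin j => ζ i)| := abs_sub_comm _ _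
          _ ≤ (2:ℝ)^(-(j:ℝ)) := by rw [abs_of_nonneg h2.1]; exact h2.2
          _ < ε/3 := hone
      calc dist x (((seqVal ζ : ℝ) : AddCircle (1:ℝ)))
          ≤ dist x (wordPt v) + dist (wordPt v) (wordPt (List.ofFn fun i : Fin j => ζ i)) +
            dist (wordPt (List.ofFn fun i : Fin j => ζ i)) (((seqVal ζ : ℝ) : AddCircle (1:ℝ))) :=
            dist_triangle4 _ _ _ _
        _ ≤ ε := by linarith
    exact ⟨seqVal ζ, hθ, hxeq.symm⟩
  · rintro x (hx | hx)
    · refine Set.Infinite.mono ?_ hx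
      rintro v ⟨⟨-, h2, -⟩, hd⟩
      exact ⟨h2, hd⟩
    · obtain ⟨r, hrΘ, rfl⟩ := hx
      simp only [ThetaDot, Set.mem_iUnion, Set.mem_singleton_iff] at hrΘ
      obtain ⟨u, ζ, hζ, rfl⟩ := hrΘ
      simp only [bigL, Set.mem_setOf_eq]
      refine Set.infinite_of_injective_forall_mem
        (f := fun n : ℕ => List.ofFn fun i : Fin (max u.length 1 + n) => ζ i) ?_ ?_
      · intro a b hab
        have := congrArg List.length hab
        simpa using this
      · intro n
        set j := max u.length 1 + n with hjdef
        have hj1 : u.length ≤ j := le_trans (le_max_left _ _) (Nat.le_add_right _ _)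
        have hj2 : 1 ≤ j := le_trans (le_max_right _ _) (Nat.le_add_right _ _)
        have htau := hζ j hj1
        have hlen : (List.ofFn fun i : Fin j => ζ i).length = j := by simp
        constructor
        · have := htau.2 j hj1 (by rw [hlen])
          rwa [List.take_of_length_le (le_of_eq hlen)] at this
        · have hd := (aux14_seqVal_sub ζ j)
          calc dist ((seqVal ζ : ℝ) : AddCircle (1:ℝ)) (wordPt (List.ofFn fun i : Fin j => ζ i))
              ≤ |seqVal ζ - wordVal (List.ofFn fun i : Fin j => ζ i)| := aux14_dist_coe _ _
            _ ≤ (2:ℝ)^(-(j:ℝ)) := by rw [abs_of_nonneg hd.1]; exact hd.2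
            _ < (2:ℝ) ^ (-(hlo * ((List.ofFn fun i : Fin j => ζ i).length : ℝ)) / α) := by
                rw [hlen]
                apply (Real.rpow_lt_rpow_left_iff one_lt_two).mpr
                have hj : (1:ℝ) ≤ (j:ℝ) := by exact_mod_cast hj2
                rw [show -(hlo * (j:ℝ))/α = -((hlo * j)/α) by ring, neg_lt_neg_iff,
                  div_lt_iff₀ hα0]
                nlinarith
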